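/- Let ζ̂ : (0,∞) → (0,∞) be twice continuously differentiable with ζ̂'(z) > 0 for all z > 0, and let ω : (0,∞) → ℝ be continuously differentiable with ω(x) ≥ 1/3 and ω'(x) ≥ 0 for all x > 0. Assume z ζ̂'(z) = ζ̂(z)·ω(ζ̂(z)) for all z > 0. Define Ĝ(z) := (z^{2/3} ζ̂'(z))^{−2}. Then Ĝ'(z) ≤ 0 for all z > 0. -/

import Mathlib

/-- Monotonicity of the weight `Ĝ(z) = (z^{2/3} ζ̂'(z))⁻²` built from the
Larson–Penston flow map. -/
theorem weight_G_monotone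
    (ζ ω : ℝ → ℝ)
    (hζ_pos : ∀ z > (0:ℝ), 0 < ζ z)
    (hζ_C2 : ContDiffOn ℝ 2 ζ (Set.Ioi 0))
    (hζ' : ∀ z > (0:ℝ), 0 < deriv ζ z)
    (hω_C1 : ContDiffOn ℝ 1 ω (Set.Ioi 0))
    (hω_lb : ∀ x > (0:ℝ), 1 / 3 ≤ ω x)
    (hω' : ∀ x > (0:ℝ), 0 ≤ deriv ω x)
    (hrel : ∀ z > (0:ℝ), z * deriv ζ z = ζ z * ω (ζ z)) :
    ∀ z > (0:ℝ),
      deriv (fun x => ((x ^ ((2:ℝ)/3) * deriv ζ x) ^ 2)⁻¹) z ≤ 0 := by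
  intro z hz
  have hmem : Set.Ioi (0:ℝ) ∈ nhds z := Ioi_mem_nhds hz
  -- ζ' is C¹ on Ioi 0
  have hζ1 : ContDiffOn ℝ 1 (deriv ζ) (Set.Ioi 0) :=
    hζ_C2.deriv_of_isOpen isOpen_Ioi (by norm_num)
  have hζ''_diff : DifferentiableAt ℝ (deriv ζ) z :=
    (hζ1.differentiableOn (by norm_num)).differentiableAt hmem
  have hζ_diff : DifferentiableAt ℝ ζ z :=
    (hζ_C2.differentiableOn (by norm_num)).differentiableAt hmem
  have hζz : 0 < ζ z := hζ_pos z hz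
  have hω_diff : DifferentiableAt ℝ ω (ζ z) :=
    (hω_C1.differentiableOn (by norm_num)).differentiableAt (Ioi_mem_nhds hζz)
  -- differentiate the relation
  have hL : HasDerivAt (fun x => x * deriv ζ x)
      (1 * deriv ζ z + z * deriv (deriv ζ) z) z :=
    (hasDerivAt_id z).mul hζ''_diff.hasDerivAt
  have hRd : HasDerivAt (fun x => ζ x * ω (ζ x))
      (deriv ζ z * ω (ζ z) + ζ z * (deriv ω (ζ z) * deriv ζ z)) z :=
    hζ_diff.hasDerivAt.mul ((hω_diff.hasDerivAt).comp z hζ_diff.hasDerivAt)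
  have heq : (fun x => x * deriv ζ x) =ᶠ[nhds z] fun x => ζ x * ω (ζ x) :=
    Filter.eventually_of_mem hmem fun x hx => hrel x hx
  have hL' : HasDerivAt (fun x => x * deriv ζ x)
      (deriv ζ z * ω (ζ z) + ζ z * (deriv ω (ζ z) * deriv ζ z)) z :=
    hRd.congr_of_eventuallyEq heq
  have key : 1 * deriv ζ z + z * deriv (deriv ζ) z
      = deriv ζ z * ω (ζ z) + ζ z * (deriv ω (ζ z) * deriv ζ z) :=
    hL.unique hL'
  have hzζ'' : z * deriv (deriv ζ) z
      = deriv ζ z * (ω (ζ z) - 1) + ζ z * deriv ω (ζ z) * deriv ζ z := by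
    linarith [key]
  -- derivative of g(x) = x^(2/3) * ζ'(x)
  set A : ℝ := (2/3) * z ^ ((2:ℝ)/3 - 1) * deriv ζ z
      + z ^ ((2:ℝ)/3) * deriv (deriv ζ) z with hA_def
  have hpow : HasDerivAt (fun x : ℝ => x ^ ((2:ℝ)/3))
      ((2:ℝ)/3 * z ^ ((2:ℝ)/3 - 1)) z := by
    simpa using Real.hasDerivAt_rpow_const (p := (2:ℝ)/3) (Or.inl hz.ne')
  have hg : HasDerivAt (fun x => x ^ ((2:ℝ)/3) * deriv ζ x) A z :=
    hpow.mul hζ''_diff.hasDerivAt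
  -- A ≥ 0
  have hBpos : (0:ℝ) < z ^ ((2:ℝ)/3) := Real.rpow_pos_of_pos hz _
  have hpow_mul : z ^ ((2:ℝ)/3 - 1) * z = z ^ ((2:ℝ)/3) := by
    rw [Real.rpow_sub hz, Real.rpow_one]
    field_simp
  have hzA : 0 ≤ z * A := by
    have h1 : z * A = z ^ ((2:ℝ)/3) * ((2/3) * deriv ζ z + z * deriv (deriv ζ) z) := by
      rw [hA_def, ← hpow_mul]; ring
    rw [h1, hzζ'']
    have hωlb : 1/3 ≤ ω (ζ z) := hω_lb _ hζz
    have hω'nn : 0 ≤ deriv ω (ζ z) := hω' _ hζz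
    have hζ'pos := hζ' z hz
    have h2 : 0 ≤ (2/3) * deriv ζ z
        + (deriv ζ z * (ω (ζ z) - 1) + ζ z * deriv ω (ζ z) * deriv ζ z) := by
      nlinarith [mul_nonneg (mul_nonneg hζz.le hω'nn) hζ'pos.le,
        mul_nonneg (sub_nonneg.mpr hωlb) hζ'pos.le]
    positivity
  have hA : 0 ≤ A := by nlinarith [hzA, mul_pos hz hz]
  -- finish
  have hgz : 0 < z ^ ((2:ℝ)/3) * deriv ζ z := mul_pos hBpos (hζ' z hz)
  have hsq : HasDerivAt (fun x => (x ^ ((2:ℝ)/3) * deriv ζ x) ^ 2)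
      ((2:ℕ) * (z ^ ((2:ℝ)/3) * deriv ζ z) ^ 1 * A) z := hg.pow 2
  have hne : (z ^ ((2:ℝ)/3) * deriv ζ z) ^ 2 ≠ 0 := by positivity
  have hG : HasDerivAt (fun x => ((x ^ ((2:ℝ)/3) * deriv ζ x) ^ 2)⁻¹)
      (-((2:ℕ) * (z ^ ((2:ℝ)/3) * deriv ζ z) ^ 1 * A)
        / ((z ^ ((2:ℝ)/3) * deriv ζ z) ^ 2) ^ 2) z := hsq.inv hne
  rw [hG.deriv]
  apply div_nonpos_of_nonpos_of_nonneg
  · simp only [pow_one]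
    push_cast
    nlinarith [mul_nonneg hgz.le hA]
  · positivity
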